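/- Let L be the Laplacian of a connected undirected graph on N vertices, a_i ∈ R^{d_i}, b_i ∈ R, and A = blkdiag(a_1,...,a_N) (so (A^T x)_i = a_i^T x_i for x = (x_1,...,x_N)). Then x satisfies Σ_i (a_i^T x_i + b_i) ≤ 0 if and only if there exists y ∈ R^N with A^T x + L y + b ≤ 0 componentwise (b = (b_1,...,b_N)). -/

import Mathlib

open Matrix

/-- The linear map summing the coordinates. -/
noncomputable def sumCoords (N : ℕ) : (Fin N → ℝ) →ₗ[ℝ] ℝ where
  toFun v := ∑ i, v i
  map_add' u v := by simp [Finset.sum_add_distrib]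
  map_smul' c v := by simp [Finset.mul_sum]

lemma sum_mulVec_lapMatrix (N : ℕ) (G : SimpleGraph (Fin N)) [DecidableRel G.Adj]
    (y : Fin N → ℝ) : ∑ i, ((G.lapMatrix ℝ) *ᵥ y) i = 0 := by
  have hcol : ∀ j, ∑ i, (G.lapMatrix ℝ) i j = 0 := by
    intro j
    have h1 : ((G.lapMatrix ℝ) *ᵥ (fun _ => 1)) j = 0 := by
      rw [G.lapMatrix_mulVec_const_eq_zero]; rfl
    have hsym := G.isSymm_lapMatrix (R := ℝ)
    simp only [mulVec, dotProduct, mul_one] at h1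
    calc ∑ i, (G.lapMatrix ℝ) i j = ∑ i, (G.lapMatrix ℝ) j i := by
          refine Finset.sum_congr rfl fun i _ => ?_
          rw [← hsym.apply i j]
      _ = 0 := h1
  calc ∑ i, ((G.lapMatrix ℝ) *ᵥ y) i
      = ∑ i, ∑ j, (G.lapMatrix ℝ) i j * y j := rfl
    _ = ∑ j, (∑ i, (G.lapMatrix ℝ) i j) * y j := by
        rw [Finset.sum_comm]; simp [Finset.sum_mul]
    _ = 0 := by simp [hcol]

lemma lap_surj_on_sum_zero (N : ℕ) (G : SimpleGraph (Fin N)) [DecidableRel G.Adj]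
    (hG : G.Connected) (t : Fin N → ℝ) (ht : ∑ i, t i = 0) :
    ∃ y : Fin N → ℝ, (G.lapMatrix ℝ) *ᵥ y = t := by
  classical
  have hN : 0 < N := by
    have : Nonempty (Fin N) := hG.nonempty
    exact Fin.pos_iff_nonempty.mpr this
  -- the range of toLin' L equals ker of sumCoords
  have hle : LinearMap.range (Matrix.toLin' (G.lapMatrix ℝ)) ≤ LinearMap.ker (sumCoords N) := by
    rintro v ⟨y, rfl⟩
    simp only [LinearMap.mem_ker, sumCoords, LinearMap.coe_mk, AddHom.coe_mk,
      Matrix.toLin'_apply]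
    exact sum_mulVec_lapMatrix N G y
  have hker : Module.finrank ℝ (LinearMap.ker (Matrix.toLin' (G.lapMatrix ℝ))) = 1 := by
    rw [← G.card_connectedComponent_eq_finrank_ker_toLin'_lapMatrix]
    have : Subsingleton G.ConnectedComponent := hG.preconnected.subsingleton_connectedComponent
    exact Fintype.card_eq_one_of_forall_eq
      (fun c => Subsingleton.elim c (G.connectedComponentMk ⟨0, hN⟩))
  have hrange : Module.finrank ℝ (LinearMap.range (Matrix.toLin' (G.lapMatrix ℝ))) = N - 1 := by
    have h := LinearMap.finrank_range_add_finrank_ker (Matrix.toLin' (G.lapMatrix ℝ))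
    rw [hker] at h
    have : Module.finrank ℝ (Fin N → ℝ) = N := by simp
    omega
  have hsurj : Function.Surjective (sumCoords N) := by
    intro c
    refine ⟨fun _ => c / N, ?_⟩
    simp only [sumCoords, LinearMap.coe_mk, AddHom.coe_mk, Finset.sum_const,
      Finset.card_univ, Fintype.card_fin, nsmul_eq_mul]
    field_simp
  have hkerS : Module.finrank ℝ (LinearMap.ker (sumCoords N)) = N - 1 := by
    have h := LinearMap.finrank_range_add_finrank_ker (sumCoords N)
    have hr : LinearMap.range (sumCoords N) = ⊤ := LinearMap.range_eq_top.mpr hsurj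
    rw [hr] at h
    have : Module.finrank ℝ (Fin N → ℝ) = N := by simp
    simp [Module.finrank_self] at h
    omega
  have heq : LinearMap.range (Matrix.toLin' (G.lapMatrix ℝ)) = LinearMap.ker (sumCoords N) :=
    Submodule.eq_of_le_of_finrank_le hle (by rw [hrange, hkerS])
  have htmem : t ∈ LinearMap.ker (sumCoords N) := by
    simp only [LinearMap.mem_ker, sumCoords, LinearMap.coe_mk, AddHom.coe_mk]; exact ht
  rw [← heq] at htmem
  obtain ⟨y, hy⟩ := htmem
  exact ⟨y, by rw [← Matrix.toLin'_apply]; exact hy⟩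

/-- A single coupling constraint `Σ_i (a_iᵀ x_i + b_i) ≤ 0` holds iff there is an
auxiliary vector `y` such that the decomposed constraints
`a_iᵀ x_i + (L y)_i + b_i ≤ 0` hold for every agent `i`. -/
theorem coupling_constraint_iff_decomposed (N : ℕ) (G : SimpleGraph (Fin N))
    [DecidableRel G.Adj] (hG : G.Connected) (d : Fin N → ℕ)
    (a : (i : Fin N) → Fin (d i) → ℝ) (b : Fin N → ℝ)
    (x : (i : Fin N) → Fin (d i) → ℝ) :
    (∑ i, (a i ⬝ᵥ x i + b i)) ≤ 0 ↔
      ∃ y : Fin N → ℝ, ∀ i, a i ⬝ᵥ x i + ((G.lapMatrix ℝ) *ᵥ y) i + b i ≤ 0 := by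
  have hN : 0 < N := Fin.pos_iff_nonempty.mpr hG.nonempty
  constructor
  · intro hS
    set S := ∑ i, (a i ⬝ᵥ x i + b i) with hSdef
    set t : Fin N → ℝ := fun i => S / N - (a i ⬝ᵥ x i + b i) with ht
    have hts : ∑ i, t i = 0 := by
      simp only [ht, Finset.sum_sub_distrib, Finset.sum_const, Finset.card_univ,
        Fintype.card_fin, nsmul_eq_mul, ← hSdef]
      field_simp
      ring
    obtain ⟨y, hy⟩ := lap_surj_on_sum_zero N G hG t hts
    refine ⟨y, fun i => ?_⟩
    rw [hy]
    have : a i ⬝ᵥ x i + t i + b i = S / N := by simp [ht]; ring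
    rw [this]
    exact div_nonpos_of_nonpos_of_nonneg hS (Nat.cast_nonneg N)
  · rintro ⟨y, hy⟩
    have hsum : ∑ i, (a i ⬝ᵥ x i + ((G.lapMatrix ℝ) *ᵥ y) i + b i) ≤ 0 :=
      Finset.sum_nonpos fun i _ => hy i
    calc ∑ i, (a i ⬝ᵥ x i + b i)
        = ∑ i, (a i ⬝ᵥ x i + ((G.lapMatrix ℝ) *ᵥ y) i + b i)
          - ∑ i, ((G.lapMatrix ℝ) *ᵥ y) i := by
          rw [← Finset.sum_sub_distrib]; refine Finset.sum_congr rfl fun i _ => ?_; ring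
      _ = ∑ i, (a i ⬝ᵥ x i + ((G.lapMatrix ℝ) *ᵥ y) i + b i) := by
          rw [sum_mulVec_lapMatrix]; ring
      _ ≤ 0 := hsum
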